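/- Let S be a pseudosymmetric numerical semigroup with S ≠ ℕ, with Frobenius number g(S) and multiplicity m(S), and suppose g(S) ≥ 2·m(S). If A is a d×d rational matrix with S(A) = S, then d ≥ m(S). -/

import Mathlib

/-- The exponent semigroup of a square rational matrix: the set of natural
numbers `n` such that every entry of `A ^ n` is an integer. -/
def expSemigroup {ι : Type*} [Fintype ι] [DecidableEq ι]
    (A : Matrix ι ι ℚ) : Set ℕ :=
  {n | ∀ i j, ∃ z : ℤ, (A ^ n) i j = (z : ℚ)}

theorem stmt_17 (S : Set ℕ)
    -- `S` is a numerical semigroup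
    (hzero : 0 ∈ S) (hadd : ∀ a ∈ S, ∀ b ∈ S, a + b ∈ S)
    (hfin : Sᶜ.Finite) (hne : S ≠ Set.univ)
    -- `g` is the Frobenius number of `S`
    (g : ℕ) (hg : g ∉ S) (hg' : ∀ n : ℕ, g < n → n ∈ S)
    -- `m` is the multiplicity of `S`
    (m : ℕ) (hmS : m ∈ S) (hm0 : m ≠ 0) (hmin : ∀ n ∈ S, n ≠ 0 → m ≤ n)
    -- `S` is pseudosymmetric
    (heven : Even g)
    (hpsym : ∀ x : ℤ, (¬ ∃ s ∈ S, (s : ℤ) = x) → x ≠ (g : ℤ) / 2 →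
      ∃ s ∈ S, (s : ℤ) = (g : ℤ) - x)
    -- the hypothesis `g(S) ≥ 2 m(S)`
    (hgm : 2 * m ≤ g)
    {d : ℕ} (A : Matrix (Fin d) (Fin d) ℚ) (hA : expSemigroup A = S) :
    m ≤ d := by
  by_contra hcon
  push_neg at hcon
  -- d > 0, since otherwise S = univ
  have hd0 : 0 < d := by
    rcases Nat.eq_zero_or_pos d with h0 | h
    · exfalso
      apply hne
      rw [← hA]
      ext n
      subst h0
      simp only [expSemigroup, Set.mem_setOf_eq, Set.mem_univ, iff_true]
      intro i
      exact i.elim0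
    · exact h
  haveI : Nonempty (Fin d) := ⟨⟨0, hd0⟩⟩
  have hmem : ∀ n ∈ S, ∀ i j, ∃ z : ℤ, (A ^ n) i j = (z : ℚ) := by
    intro n hn
    rw [← hA] at hn
    exact hn
  -- pseudosymmetry: g - x ∈ S for 1 ≤ x ≤ d
  have hgx : ∀ x : ℕ, 1 ≤ x → x ≤ d → (g - x) ∈ S := by
    intro x hx1 hxd
    have hxm : x < m := lt_of_le_of_lt hxd hcon
    have hxS : ¬ ∃ s ∈ S, (s : ℤ) = (x : ℤ) := by
      rintro ⟨s, hsS, hseq⟩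
      have : s = x := by exact_mod_cast hseq
      subst this
      have := hmin s hsS (by omega)
      omega
    obtain ⟨t, ht⟩ := heven
    have hxh : (x : ℤ) ≠ (g : ℤ) / 2 := by
      have hgt : (g : ℤ) = 2 * (t : ℤ) := by push_cast; omega
      rw [hgt, Int.mul_ediv_cancel_left _ two_ne_zero]
      have hxt : x < t := by omega
      exact_mod_cast hxt.ne
    obtain ⟨s, hsS, hseq⟩ := hpsym (x : ℤ) hxS hxh
    have hs : s = g - x := by omega
    rwa [← hs]
  -- A ^ (g+1) is an integer matrix
  have hg1 : g + 1 ∈ S := hg' _ (Nat.lt_succ_self g)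
  have hC : ∀ i j, (A ^ (g + 1)) i j = (((fun i j => (hmem (g+1) hg1 i j).choose :
      Matrix (Fin d) (Fin d) ℤ) i j : ℤ) : ℚ) := fun i j => (hmem (g+1) hg1 i j).choose_spec
  set C : Matrix (Fin d) (Fin d) ℤ := fun i j => (hmem (g+1) hg1 i j).choose with hCdef
  have hmap : (C.map (fun z : ℤ => (z : ℚ))) = A ^ (g + 1) := by
    ext i j
    rw [Matrix.map_apply]
    exact (hC i j).symm
  -- A is integral over ℤ
  have hCint : IsIntegral ℤ C := ⟨C.charpoly, C.charpoly_monic, C.aeval_self_charpoly⟩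
  have hpowint : IsIntegral ℤ (A ^ (g + 1)) := by
    rw [← hmap]
    have := map_isIntegral_int ((Int.castRingHom ℚ).mapMatrix) hCint
    convert this using 1
    · exact Subsingleton.elim _ _
    · rfl
  have hAint : IsIntegral ℤ A := IsIntegral.of_pow (Nat.succ_pos g) hpowint
  -- the minimal polynomial of A over ℚ
  have hAratint : IsIntegral ℚ A := ⟨A.charpoly, A.charpoly_monic, A.aeval_self_charpoly⟩
  set q : Polynomial ℚ := minpoly ℚ A with hq
  have hqmonic : q.Monic := minpoly.monic hAratint
  have hqe : q.natDegree ≤ d := by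
    have h1 : q.degree ≤ (A.charpoly).degree :=
      minpoly.degree_le_of_ne_zero ℚ A A.charpoly_monic.ne_zero A.aeval_self_charpoly
    have h2 : (A.charpoly).natDegree = d := by
      rw [Matrix.charpoly_natDegree_eq_dim, Fintype.card_fin]
    calc q.natDegree ≤ (A.charpoly).natDegree := Polynomial.natDegree_le_natDegree h1
    _ = d := h2
  have hqpos : 0 < q.natDegree := minpoly.natDegree_pos hAratint
  -- the minimal polynomial has integer coefficients
  obtain ⟨P, hPmonic, hPzero⟩ := hAint
  have hdvd : q ∣ P.map (algebraMap ℤ ℚ) := by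
    apply minpoly.dvd
    rwa [Polynomial.aeval_map_algebraMap]
  obtain ⟨Q, hQ⟩ := IsIntegrallyClosed.eq_map_mul_C_of_dvd ℚ hPmonic hdvd
  rw [hqmonic.leadingCoeff, Polynomial.C_1, mul_one] at hQ
  -- recurrence of length e := natDegree q
  set e := q.natDegree with he
  have hed : e ≤ d := hqe
  have hrec : A ^ e = -∑ k ∈ Finset.range e, q.coeff k • A ^ k := by
    have hsum : ∑ k ∈ Finset.range (e + 1), q.coeff k • A ^ k = 0 := by
      rw [← Polynomial.aeval_eq_sum_range, minpoly.aeval]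
    rw [Finset.sum_range_succ, hqmonic.coeff_natDegree, one_smul] at hsum
    linear_combination (norm := abel) hsum
  have hge : e ≤ g := by omega
  have hAg : A ^ g = -∑ k ∈ Finset.range e, q.coeff k • A ^ (g - e + k) := by
    have : A ^ g = A ^ (g - e) * A ^ e := by
      rw [← pow_add]
      congr 1
      omega
    rw [this, hrec, mul_neg, Finset.mul_sum]
    congr 1
    apply Finset.sum_congr rfl
    intro k _
    rw [Matrix.mul_smul, ← pow_add]
  -- conclude g ∈ S, a contradiction
  apply hg
  rw [← hA]
  intro i j
  have hR : (A ^ g) i j ∈ (Int.castRingHom ℚ).range := by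
    rw [hAg]
    rw [Matrix.neg_apply, Matrix.sum_apply]
    apply neg_mem
    apply sum_mem
    intro k hk
    rw [Matrix.smul_apply, smul_eq_mul]
    apply mul_mem
    · rw [← hQ, Polynomial.coeff_map]
      exact ⟨Q.coeff k, rfl⟩
    · have hk' : k < e := Finset.mem_range.mp hk
      have hmem' : g - e + k ∈ S := by
        have : g - e + k = g - (e - k) := by omega
        rw [this]
        exact hgx (e - k) (by omega) (by omega)
      obtain ⟨z, hz⟩ := hmem _ hmem' i j
      exact ⟨z, hz.symm⟩
  obtain ⟨z, hz⟩ := hR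
  exact ⟨z, hz.symm⟩
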